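/- Let k ≥ 1, d ≥ 1, and let γ_1 < γ_2 < … < γ_{k+1} be strictly increasing real labels. Then the constraint set K = { q ∈ ℝ^{k×d} : ‖q^T(1_i^α − 1_j^β)‖_2 ≤ |γ_i^α − γ_j^β| for all 1 ≤ j ≤ i ≤ k and all α, β ∈ [0,1] } equals the set { q ∈ ℝ^{k×d} : ‖q_i‖_2 ≤ γ_{i+1} − γ_i for all 1 ≤ i ≤ k }, where q_i ∈ ℝ^d denotes the i-th row of q. In particular, the infinitely many constraints defining K reduce to k norm constraints. -/

import Mathlib

/-- `1_i^α` (with 0-based interval index `i`): first `i` entries 1, entry `i` equals `α`,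
remaining entries 0.  This is `α • 1_{i+1} + (1-α) • 1_i` in the 0-based numbering of `onevec`. -/
noncomputable def liftvec {k : ℕ} (i : Fin k) (α : ℝ) : Fin k → ℝ :=
  fun j => if (j : ℕ) < (i : ℕ) then 1 else if j = i then α else 0

/-- `γ_i^α = γ_i + α (γ_{i+1} - γ_i)`, with 0-based interval index `i`. -/
noncomputable def gammaAff {k : ℕ} (γ : Fin (k+1) → ℝ) (i : Fin k) (α : ℝ) : ℝ :=
  γ i.castSucc + α * (γ i.succ - γ i.castSucc)

/-- Frobenius inner product on ℝ^{k×d}. -/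
noncomputable def pairM {k d : ℕ} (q g : Fin k → Fin d → ℝ) : ℝ := ∑ m, ∑ l, q m l * g m l

/-- Convex conjugate on ℝ^{k×d} w.r.t. the Frobenius inner product. -/
noncomputable def conjM {k d : ℕ} (f : (Fin k → Fin d → ℝ) → EReal)
    (q : Fin k → Fin d → ℝ) : EReal :=
  ⨆ g : Fin k → Fin d → ℝ, (pairM q g : EReal) - f g

/-- Euclidean norm on ℝ^d. -/
noncomputable def enorm2 {d : ℕ} (x : Fin d → ℝ) : ℝ := Real.sqrt (∑ l, x l ^ 2)

/-- `q^T v ∈ ℝ^d` for `q ∈ ℝ^{k×d}`, `v ∈ ℝ^k`. -/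
noncomputable def matT {k d : ℕ} (q : Fin k → Fin d → ℝ) (v : Fin k → ℝ) : Fin d → ℝ :=
  fun l => ∑ m, q m l * v m

lemma enorm2_eq {d : ℕ} (x : EuclideanSpace ℝ (Fin d)) : enorm2 x = ‖x‖ := by
  rw [EuclideanSpace.norm_eq, enorm2]
  congr 1
  exact Finset.sum_congr rfl fun l _ => by rw [Real.norm_eq_abs, sq_abs]

lemma sumS {k : ℕ} (γ : Fin (k+1) → ℝ) (i : Fin k) (α : ℝ) :
    ∑ m : Fin k, liftvec i α m * (γ m.succ - γ m.castSucc) = gammaAff γ i α - γ 0 := by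
  set g : ℕ → ℝ := fun n => γ ⟨min n k, Nat.lt_succ_of_le (min_le_right _ _)⟩ with hg
  have hgc : ∀ m : Fin k, γ m.castSucc = g m.val := fun m =>
    congrArg γ (Fin.ext (by simp [hg, Nat.min_eq_left m.isLt.le]))
  have hgs : ∀ m : Fin k, γ m.succ = g (m.val + 1) := fun m =>
    congrArg γ (Fin.ext (by simp [hg, Nat.min_eq_left m.isLt]))
  have h0 : γ 0 = g 0 := congrArg γ (Fin.ext (by simp [hg]))
  calc ∑ m : Fin k, liftvec i α m * (γ m.succ - γ m.castSucc)
      = ∑ m ∈ Finset.range k,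
          (if m < (i:ℕ) then 1 else if m = (i:ℕ) then α else 0) * (g (m+1) - g m) := by
        rw [← Fin.sum_univ_eq_sum_range]
        refine Finset.sum_congr rfl fun m _ => ?_
        simp [liftvec, hgc m, hgs m, Fin.ext_iff]
    _ = ∑ m ∈ Finset.range ((i:ℕ)+1),
          (if m < (i:ℕ) then 1 else if m = (i:ℕ) then α else 0) * (g (m+1) - g m) := by
        refine (Finset.sum_subset ?_ ?_).symm
        · exact Finset.range_subset_range.mpr i.isLt
        · intro m _ hm
          have h1 : (i:ℕ) < m := by
            have := Finset.mem_range.not.mp hm; omega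
          have h2 : ¬ (m < (i:ℕ)) := by omega
          have h3 : ¬ (m = (i:ℕ)) := by omega
          simp [h2, h3]
    _ = (∑ m ∈ Finset.range (i:ℕ), (g (m+1) - g m)) + α * (g ((i:ℕ)+1) - g (i:ℕ)) := by
        rw [Finset.sum_range_succ]
        simp only [lt_irrefl, if_false, if_pos rfl, if_true]
        congr 1
        refine Finset.sum_congr rfl fun m hm => ?_
        simp [Finset.mem_range.mp hm]
    _ = (g (i:ℕ) - g 0) + α * (g ((i:ℕ)+1) - g (i:ℕ)) := by rw [Finset.sum_range_sub]
    _ = gammaAff γ i α - γ 0 := by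
        rw [gammaAff, hgc i, hgs i, h0]; ring

lemma normBound {k d : ℕ} (q : Fin k → Fin d → ℝ) (v : Fin k → ℝ) :
    enorm2 (matT q v) ≤ ∑ m, |v m| * enorm2 (q m) := by
  have key : matT q v = ∑ m, v m • q m := by
    funext l
    rw [matT]
    simp [Finset.sum_apply, mul_comm]
  rw [key]
  set Q : Fin k → EuclideanSpace ℝ (Fin d) := fun m => (WithLp.equiv 2 _).symm (q m) with hQdef
  have hQ : ∀ m, enorm2 (q m) = ‖Q m‖ := fun m => enorm2_eq (Q m)
  calc enorm2 (∑ m, v m • q m) = ‖∑ m, v m • Q m‖ := by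
        rw [← enorm2_eq]; simp [hQdef]
    _ ≤ ∑ m, ‖v m • Q m‖ := norm_sum_le _ _
    _ = ∑ m, |v m| * enorm2 (q m) := by
        refine Finset.sum_congr rfl fun m _ => ?_
        rw [norm_smul, Real.norm_eq_abs, hQ m]

/-- Proposition 5. For strictly increasing labels, the constraint set
`K = { q : ‖q^T (1_i^α - 1_j^β)‖₂ ≤ |γ_i^α - γ_j^β|, ∀ 1 ≤ j ≤ i ≤ k, ∀ α, β ∈ [0,1] }`
equals `{ q : ‖q_i‖₂ ≤ γ_{i+1} - γ_i, ∀ 1 ≤ i ≤ k }`, where `q i` is the `i`-th row of `q`. -/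
theorem constraint_set_reduction {k d : ℕ} (hk : 1 ≤ k) (hd : 1 ≤ d) (γ : Fin (k+1) → ℝ)
    (hγ : StrictMono γ) :
    {q : Fin k → Fin d → ℝ | ∀ i j : Fin k, j ≤ i →
        ∀ α ∈ Set.Icc (0:ℝ) 1, ∀ β ∈ Set.Icc (0:ℝ) 1,
          enorm2 (matT q (liftvec i α - liftvec j β)) ≤ |gammaAff γ i α - gammaAff γ j β|}
      = {q : Fin k → Fin d → ℝ | ∀ i : Fin k, enorm2 (q i) ≤ γ i.succ - γ i.castSucc} := by

  have hΔ : ∀ m : Fin k, 0 ≤ γ m.succ - γ m.castSucc := fun m =>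
    le_of_lt (sub_pos.mpr (hγ (Fin.castSucc_lt_succ : m.castSucc < m.succ)))
  ext q
  simp only [Set.mem_setOf_eq]
  constructor
  · intro hq i
    have h := hq i i le_rfl 1 ⟨zero_le_one, le_rfl⟩ 0 ⟨le_rfl, zero_le_one⟩
    have hv : matT q (liftvec i (1:ℝ) - liftvec i 0) = q i := by
      funext l
      have hvv : (liftvec i (1:ℝ) - liftvec i 0) = fun m => if m = i then (1:ℝ) else 0 := by
        funext m
        by_cases h1 : (m:ℕ) < (i:ℕ)
        · have h2 : m ≠ i := by
            intro h; subst h; omega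
          simp [liftvec, h1, h2]
        · simp [liftvec, h1]
      rw [matT, hvv]
      simp
    rw [hv] at h
    have hg : gammaAff γ i 1 - gammaAff γ i 0 = γ i.succ - γ i.castSucc := by
      simp [gammaAff]
    rw [hg, abs_of_nonneg (hΔ i)] at h
    exact h
  · intro hq i j hji α hα β hβ
    obtain ⟨hα0, hα1⟩ := hα
    obtain ⟨hβ0, hβ1⟩ := hβ
    refine (normBound q _).trans ?_
    have step : ∑ m, |(liftvec i α - liftvec j β) m| * enorm2 (q m)
        ≤ ∑ m, |(liftvec i α - liftvec j β) m| * (γ m.succ - γ m.castSucc) :=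
      Finset.sum_le_sum fun m _ => mul_le_mul_of_nonneg_left (hq m) (abs_nonneg _)
    refine step.trans ?_
    rcases lt_or_eq_of_le hji with hlt | heq
    · -- j < i
      have hlt' : (j:ℕ) < (i:ℕ) := hlt
      have hvnn : ∀ m, 0 ≤ (liftvec i α - liftvec j β) m := by
        intro m
        simp only [Pi.sub_apply, liftvec, Fin.ext_iff]
        split_ifs <;> first | linarith | (exfalso; omega)
      have hsum : ∑ m, |(liftvec i α - liftvec j β) m| * (γ m.succ - γ m.castSucc)
          = gammaAff γ i α - gammaAff γ j β := by
        calc ∑ m, |(liftvec i α - liftvec j β) m| * (γ m.succ - γ m.castSucc)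
            = ∑ m, (liftvec i α m * (γ m.succ - γ m.castSucc)
                - liftvec j β m * (γ m.succ - γ m.castSucc)) := by
              refine Finset.sum_congr rfl fun m _ => ?_
              rw [abs_of_nonneg (hvnn m), Pi.sub_apply]; ring
          _ = (∑ m, liftvec i α m * (γ m.succ - γ m.castSucc))
              - ∑ m, liftvec j β m * (γ m.succ - γ m.castSucc) := Finset.sum_sub_distrib _ _
          _ = gammaAff γ i α - gammaAff γ j β := by rw [sumS, sumS]; ring
      have hnn : 0 ≤ gammaAff γ i α - gammaAff γ j β := by
        rw [← hsum]
        exact Finset.sum_nonneg fun m _ => mul_nonneg (abs_nonneg _) (hΔ m)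
      rw [abs_of_nonneg hnn]
      exact le_of_eq hsum
    · -- j = i
      subst heq
      have hsum : ∑ m, |(liftvec j α - liftvec j β) m| * (γ m.succ - γ m.castSucc)
          = |α - β| * (γ j.succ - γ j.castSucc) := by
        have hvv : (fun m => |(liftvec j α - liftvec j β) m| * (γ m.succ - γ m.castSucc))
            = fun m => if m = j then |α - β| * (γ j.succ - γ j.castSucc) else 0 := by
          funext m
          by_cases h1 : (m:ℕ) < (j:ℕ)
          · have h2 : m ≠ j := by intro h; subst h; omega
            simp [liftvec, h1, h2]
          · by_cases h2 : m = j
            · subst h2; simp [liftvec, h1]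
            · simp [liftvec, h1, h2]
        rw [hvv, Finset.sum_ite_eq' Finset.univ j]
        simp
      have hg : |gammaAff γ j α - gammaAff γ j β| = |α - β| * (γ j.succ - γ j.castSucc) := by
        have : gammaAff γ j α - gammaAff γ j β = (α - β) * (γ j.succ - γ j.castSucc) := by
          simp [gammaAff]; ring
        rw [this, abs_mul, abs_of_nonneg (hΔ j)]
      rw [hg]
      exact le_of_eq hsum
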